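/- The Constraint Grammar safety invariant is preserved by comonadic extension: let R be a type of readings and let r : Zipper (Set R) → Set R be a rule such that for every zipper z whose focus is a nonempty set, r z is nonempty. Then for every zipper z : Zipper (Set R) all of whose positions (every element of the left context, the focus, and every element of the right context) are nonempty sets, every position of extend r z is a nonempty set. Consequently, iterating extend over any sequence of such rules never removes the last reading at any position. -/

import Mathlib

/-- A list zipper: a focused element with left context (stored reversed,
nearest neighbor first) and right context. -/
structure Zipper (α : Type*) where
  left : List α
  focus : α
  right : List α

namespace Zipper

variable {α β γ δ : Type*}

/-- Extract the focused element. -/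
def extract (z : Zipper α) : α := z.focus

/-- Move the focus one step to the left (identity if the left context is empty). -/
def moveLeft : Zipper α → Zipper α
  | ⟨a :: l, c, r⟩ => ⟨l, a, c :: r⟩
  | z => z

/-- Move the focus one step to the right (identity if the right context is empty). -/
def moveRight : Zipper α → Zipper α
  | ⟨l, c, b :: r⟩ => ⟨c :: l, b, r⟩
  | z => z

/-- Auxiliary: successive left shifts, structurally on the left context. -/
def leftsAux : List α → α → List α → List (Zipper α)
  | [], _, _ => []
  | a :: l, c, r => ⟨l, a, c :: r⟩ :: leftsAux l a (c :: r)

/-- The list [moveLeft z, moveLeft (moveLeft z), …] of successive left shifts. -/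
def lefts (z : Zipper α) : List (Zipper α) := leftsAux z.left z.focus z.right

/-- Auxiliary: successive right shifts, structurally on the right context. -/
def rightsAux : List α → α → List α → List (Zipper α)
  | _, _, [] => []
  | l, c, b :: r => ⟨c :: l, b, r⟩ :: rightsAux (c :: l) b r

/-- The list [moveRight z, moveRight (moveRight z), …] of successive right shifts. -/
def rights (z : Zipper α) : List (Zipper α) := rightsAux z.left z.focus z.right

/-- CoKleisli extension: apply the local rule `f` at every position. -/
def extend (f : Zipper α → β) (z : Zipper α) : Zipper β :=
  ⟨(lefts z).map f, f z, (rights z).map f⟩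

/-- The underlying list of a zipper. -/
def toList (z : Zipper α) : List α := z.left.reverse ++ [z.focus] ++ z.right

/-- The zipper refocused at position `i` (intended for `i < (toList z).length`). -/
def focusAt (z : Zipper α) (i : ℕ) : Zipper α :=
  ⟨((toList z).take i).reverse, (toList z).getD i z.focus, (toList z).drop (i + 1)⟩

end Zipper

/-- All positions of a zipper of reading sets are nonempty. -/
def allPositionsNonempty {R : Type*} (z : Zipper (Set R)) : Prop :=
  (∀ s ∈ z.left, s.Nonempty) ∧ z.focus.Nonempty ∧ (∀ s ∈ z.right, s.Nonempty)


lemma focus_mem_leftsAux {α : Type*} : ∀ (l : List α) (c : α) (r : List α),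
    ∀ z' ∈ Zipper.leftsAux l c r, z'.focus ∈ l := by
  intro l
  induction l with
  | nil => intro c r z' h; simp [Zipper.leftsAux] at h
  | cons a t ih =>
    intro c r z' h
    simp only [Zipper.leftsAux, List.mem_cons] at h
    rcases h with h | h
    · subst h; simp
    · exact List.mem_cons_of_mem _ (ih a (c :: r) z' h)

lemma focus_mem_rightsAux {α : Type*} : ∀ (r : List α) (c : α) (l : List α),
    ∀ z' ∈ Zipper.rightsAux l c r, z'.focus ∈ r := by
  intro r
  induction r with
  | nil => intro c l z' h; simp [Zipper.rightsAux] at h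
  | cons b t ih =>
    intro c l z' h
    simp only [Zipper.rightsAux, List.mem_cons] at h
    rcases h with h | h
    · subst h; simp
    · exact List.mem_cons_of_mem _ (ih b (c :: l) z' h)

lemma extend_preserves {R : Type*} (r : Zipper (Set R) → Set R)
    (hr : ∀ z : Zipper (Set R), z.focus.Nonempty → (r z).Nonempty)
    (z : Zipper (Set R)) (hz : allPositionsNonempty z) :
    allPositionsNonempty (Zipper.extend r z) := by
  obtain ⟨hl, hf, hrr⟩ := hz
  refine ⟨?_, hr z hf, ?_⟩
  · intro s hs
    simp only [Zipper.extend, List.mem_map] at hs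
    obtain ⟨z', hz', rfl⟩ := hs
    exact hr z' (hl _ (focus_mem_leftsAux _ _ _ z' hz'))
  · intro s hs
    simp only [Zipper.extend, List.mem_map] at hs
    obtain ⟨z', hz', rfl⟩ := hs
    exact hr z' (hrr _ (focus_mem_rightsAux _ _ _ z' hz'))

/-- The Constraint Grammar safety invariant is preserved by comonadic
extension: a rule that never empties a nonempty focus preserves nonemptiness
of all positions under extend; consequently, iterating extend over any
sequence of such rules never removes the last reading at any position. -/
theorem cg_safety_invariant {R : Type*} (r : Zipper (Set R) → Set R)
    (hr : ∀ z : Zipper (Set R), z.focus.Nonempty → (r z).Nonempty)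
    (z : Zipper (Set R)) (hz : allPositionsNonempty z) :
    allPositionsNonempty (Zipper.extend r z) ∧
    ∀ rules : List (Zipper (Set R) → Set R),
      (∀ r' ∈ rules, ∀ z' : Zipper (Set R), z'.focus.Nonempty → (r' z').Nonempty) →
      allPositionsNonempty (rules.foldl (fun z' r' => Zipper.extend r' z') z) := by
  refine ⟨extend_preserves r hr z hz, ?_⟩
  intro rules
  induction rules generalizing z with
  | nil => intro _; exact hz
  | cons r0 rs ih =>
    intro h
    simp only [List.foldl_cons]
    exact ih _ (extend_preserves r0 (h r0 List.mem_cons_self) z hz)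
      (fun r' hr' => h r' (List.mem_cons_of_mem _ hr'))
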